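/- Let q be a prime power and θ ∈ F_{q²} with θ ∉ F_q (so F_{q²} = F_q(θ)), and let χ be a nontrivial multiplicative character of F_{q²}. Set B = Σ_{α ∈ F_q} χ(θ + α). If the order of χ does not divide q + 1, then |B| = √q; if the order of χ divides q + 1, then B = −1. -/

import Mathlib

/-- Every nonzero `(q-1)`-st root of unity in `E` is a `(q+1)`-st power. -/
theorem aux_pow_q_add_one (q : ℕ) (hq2 : 2 ≤ q) (E : Type*) [Field E] [Fintype E]
    (hE : Fintype.card E = q ^ 2) (z : E) (hz : z ≠ 0) (h1 : z ^ (q - 1) = 1) :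
    ∃ w : E, w ≠ 0 ∧ w ^ (q + 1) = z := by
  obtain ⟨g, hg⟩ := IsCyclic.exists_generator (α := Eˣ)
  have hcard : Nat.card Eˣ = q ^ 2 - 1 := by
    rw [Nat.card_units, Nat.card_eq_fintype_card, hE]
  have horder : orderOf g = q ^ 2 - 1 := by
    rw [orderOf_eq_card_of_forall_mem_zpowers hg, hcard]
  set u : Eˣ := Units.mk0 z hz with hu
  obtain ⟨k, hk⟩ := hg u
  have hk' : g ^ k = u := hk
  have hu1 : u ^ (q - 1) = 1 := by ext; push_cast; exact h1
  have hg1 : g ^ (k * ((q - 1 : ℕ) : ℤ)) = 1 := by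
    rw [zpow_mul, hk', zpow_natCast, hu1]
  have hdvd : ((q ^ 2 - 1 : ℕ) : ℤ) ∣ k * ((q - 1 : ℕ) : ℤ) := by
    rw [← horder]
    exact orderOf_dvd_iff_zpow_eq_one.mpr hg1
  have hfact : (q ^ 2 - 1 : ℕ) = (q + 1) * (q - 1) := by
    zify [show 1 ≤ q by omega, show 1 ≤ q ^ 2 by nlinarith]
    ring
  have hcast : ((q - 1 : ℕ) : ℤ) = (q : ℤ) - 1 := by
    push_cast [Nat.cast_sub (show 1 ≤ q by omega)]; ring
  have hq1ne : ((q : ℤ) - 1) ≠ 0 := by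
    have : (2 : ℤ) ≤ q := by exact_mod_cast hq2
    omega
  have hdvd2 : ∃ m : ℤ, k = ((q + 1 : ℕ) : ℤ) * m := by
    rcases hdvd with ⟨m, hm⟩
    rw [hfact] at hm
    push_cast [hcast] at hm
    refine ⟨m, mul_right_cancel₀ hq1ne ?_⟩
    push_cast [hcast]
    linarith [hm]
  obtain ⟨m, hm⟩ := hdvd2
  have key : (g ^ m) ^ (q + 1) = u := by
    rw [← hk', hm, ← zpow_natCast (g ^ m) (q + 1), ← zpow_mul, mul_comm]
  refine ⟨((g ^ m : Eˣ) : E), Units.ne_zero _, ?_⟩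
  rw [← Units.val_pow_eq_pow_val, key, hu, Units.val_mk0]

/-- Every `(q-1)`-st root of unity in `E` comes from `F`. -/
theorem aux_mem_range (q : ℕ) (hq2 : 2 ≤ q) (F E : Type*) [Field F] [Fintype F]
    [Field E] [Algebra F E] (hF : Fintype.card F = q)
    (z : E) (h1 : z ^ (q - 1) = 1) :
    ∃ y : F, y ≠ 0 ∧ algebraMap F E y = z := by
  classical
  set p : Polynomial E := Polynomial.X ^ (q - 1) - Polynomial.C 1 with hp
  have hq1 : 0 < q - 1 := by omega
  have hpne : p ≠ 0 := Polynomial.X_pow_sub_C_ne_zero hq1 1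
  have hpdeg : p.natDegree = q - 1 := Polynomial.natDegree_X_pow_sub_C
  set f : Fˣ → E := fun y => algebraMap F E (Units.val y) with hf
  set T : Finset E := (Finset.univ : Finset Fˣ).image f with hT
  have hinj : Function.Injective f := by
    intro a b hab
    exact Units.ext ((algebraMap F E).injective hab)
  have hTcard : T.card = q - 1 := by
    rw [hT, Finset.card_image_of_injective _ hinj, Finset.card_univ, Fintype.card_units, hF]
  have hroot : ∀ t : E, t ^ (q - 1) = 1 → t ∈ p.roots.toFinset := by
    intro t ht
    rw [Multiset.mem_toFinset, Polynomial.mem_roots hpne]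
    simp [Polynomial.IsRoot, hp, ht]
  have hTsub : T ⊆ p.roots.toFinset := by
    intro t htT
    rw [hT, Finset.mem_image] at htT
    obtain ⟨y, _, rfl⟩ := htT
    apply hroot
    rw [hf, ← map_pow, ← map_one (algebraMap F E)]
    congr 1
    have := FiniteField.pow_card_sub_one_eq_one (Units.val y) (Units.ne_zero y)
    rwa [hF] at this
  by_cases hzT : z ∈ T
  · rw [hT, Finset.mem_image] at hzT
    obtain ⟨y, _, hy⟩ := hzT
    exact ⟨Units.val y, Units.ne_zero y, hy⟩
  · exfalso
    have hins : insert z T ⊆ p.roots.toFinset := by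
      intro t ht
      rcases Finset.mem_insert.mp ht with rfl | ht
      · exact hroot t h1
      · exact hTsub ht
    have hc1 : (insert z T).card = q := by
      rw [Finset.card_insert_of_notMem hzT, hTcard]; omega
    have hc2 : p.roots.toFinset.card ≤ q - 1 := by
      calc p.roots.toFinset.card ≤ Multiset.card p.roots := p.roots.toFinset_card_le
        _ ≤ p.natDegree := p.card_roots'
        _ = q - 1 := hpdeg
    have := Finset.card_le_card hins
    omega

/-- The order of `χ` divides `q+1` iff `χ` is trivial on the image of `Fˣ`. -/
theorem aux_order_iff (q : ℕ) (hq2 : 2 ≤ q) (F E : Type*) [Field F] [Fintype F]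
    [Field E] [Fintype E] [Algebra F E] (hF : Fintype.card F = q) (hE : Fintype.card E = q ^ 2)
    (χ : MulChar E ℂ) :
    orderOf χ ∣ q + 1 ↔ ∀ y : F, y ≠ 0 → χ (algebraMap F E y) = 1 := by
  have hfact : (q + 1) * (q - 1) = q ^ 2 - 1 := by
    zify [show 1 ≤ q by omega, show 1 ≤ q ^ 2 by nlinarith]
    ring
  constructor
  · intro hd y hy
    have hpow : χ ^ (q + 1) = 1 := orderOf_dvd_iff_pow_eq_one.mp hd
    have hz : algebraMap F E y ≠ 0 := by
      simpa using (map_ne_zero (algebraMap F E)).mpr hy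
    have h1 : (algebraMap F E y) ^ (q - 1) = 1 := by
      rw [← map_pow, ← map_one (algebraMap F E)]
      congr 1
      have := FiniteField.pow_card_sub_one_eq_one y hy
      rwa [hF] at this
    obtain ⟨w, hw0, hw⟩ := aux_pow_q_add_one q hq2 E hE _ hz h1
    rw [← hw, map_pow]
    have hwu : IsUnit w := hw0.isUnit
    calc χ w ^ (q + 1) = (χ ^ (q + 1)) w := (MulChar.pow_apply' χ (by omega) w).symm
      _ = (1 : MulChar E ℂ) hwu.unit := by rw [hpow, IsUnit.unit_spec]
      _ = 1 := MulChar.one_apply_coe hwu.unit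
  · intro h
    rw [orderOf_dvd_iff_pow_eq_one]
    apply MulChar.ext
    intro a
    rw [MulChar.pow_apply' χ (by omega) (a : E), MulChar.one_apply_coe]
    have hx : ((a : E) ^ (q + 1)) ^ (q - 1) = 1 := by
      rw [← pow_mul, hfact, ← hE]
      exact FiniteField.pow_card_sub_one_eq_one (a : E) (Units.ne_zero a)
    obtain ⟨y, hy0, hy⟩ := aux_mem_range q hq2 F E hF _ hx
    rw [← map_pow, ← hy, h y hy0]

/-- `(u, v) ↦ u + vθ` is a bijection `F × F → E` when `θ ∉ F`. -/
theorem aux_phi_bij (q : ℕ) (F E : Type*) [Field F] [Fintype F] [Field E] [Fintype E]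
    [Algebra F E] (hF : Fintype.card F = q) (hE : Fintype.card E = q ^ 2)
    (θ : E) (hθ : θ ∉ Set.range (algebraMap F E)) :
    Function.Bijective (fun p : F × F => algebraMap F E p.1 + algebraMap F E p.2 * θ) := by
  rw [Fintype.bijective_iff_injective_and_card]
  constructor
  · rintro ⟨u, v⟩ ⟨u', v'⟩ h
    simp only at h
    by_cases hv : v = v'
    · subst hv
      have : algebraMap F E u = algebraMap F E u' := by linear_combination h
      have hu : u = u' := (algebraMap F E).injective this
      simp [hu]
    · exfalso
      apply hθ
      have hvv : algebraMap F E (v' - v) ≠ 0 := by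
        simpa using (map_ne_zero (algebraMap F E)).mpr (sub_ne_zero.mpr (Ne.symm hv))
      refine ⟨(u - u') / (v' - v), ?_⟩
      rw [map_div₀, div_eq_iff hvv]
      simp only [map_sub]
      linear_combination h
  · rw [Fintype.card_prod, hF, hE]; ring

/-- Let `q` be a prime power, `θ ∈ F_{q²} \ F_q`, and `χ` a nontrivial
multiplicative character of `F_{q²}`. Put `B = Σ_{α ∈ F_q} χ(θ + α)`. If `ord(χ) ∤ q + 1`
then `|B| = √q`; if `ord(χ) ∣ q + 1` then `B = -1`. -/
theorem katz_character_sum (q : ℕ) (hq : IsPrimePow q)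
    (F E : Type*) [Field F] [Fintype F] [Field E] [Fintype E] [Algebra F E]
    (hF : Fintype.card F = q) (hE : Fintype.card E = q ^ 2)
    (θ : E) (hθ : θ ∉ Set.range (algebraMap F E))
    (χ : MulChar E ℂ) (hχ : χ ≠ 1)
    (B : ℂ) (hB : B = ∑ α : F, χ (θ + algebraMap F E α)) :
    (¬ orderOf χ ∣ q + 1 → ‖B‖ = Real.sqrt q) ∧
    (orderOf χ ∣ q + 1 → B = -1) := by
  classical
  have hq2 : 2 ≤ q := hq.two_le
  have hsumE : ∑ x : E, χ x = 0 := MulChar.sum_eq_zero_of_ne_one hχ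
  have hainj : Function.Injective (algebraMap F E) := (algebraMap F E).injective
  have hne : ∀ β : F, θ + algebraMap F E β ≠ 0 := by
    intro β h
    refine hθ ⟨-β, ?_⟩
    simp only [map_neg]
    linear_combination -h
  set SF : ℂ := ∑ y : F, χ (algebraMap F E y) with hSF
  -- the general structural identity: SF + (∑_{v ≠ 0} χ(v)) * B = 0
  have hstruct : SF + (∑ v ∈ Finset.univ.erase (0 : F), χ (algebraMap F E v)) * B = 0 := by
    have hPhi : ∑ p : F × F, χ (algebraMap F E p.1 + algebraMap F E p.2 * θ) = 0 := by
      rw [Fintype.sum_bijective _ (aux_phi_bij q F E hF hE θ hθ)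
        (fun p : F × F => χ (algebraMap F E p.1 + algebraMap F E p.2 * θ)) χ (fun p => rfl)]
      exact hsumE
    rw [Fintype.sum_prod_type, Finset.sum_comm] at hPhi
    rw [← Finset.add_sum_erase Finset.univ _ (Finset.mem_univ (0 : F))] at hPhi
    have h0row : ∑ u : F, χ (algebraMap F E u + algebraMap F E (0 : F) * θ) = SF := by
      apply Finset.sum_congr rfl
      intro u _
      simp
    have hrow : ∀ v ∈ Finset.univ.erase (0 : F),
        ∑ u : F, χ (algebraMap F E u + algebraMap F E v * θ) = χ (algebraMap F E v) * B := by
      intro v hv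
      have hv0 : v ≠ 0 := Finset.ne_of_mem_erase hv
      have hre : ∑ α : F, χ (algebraMap F E (v * α) + algebraMap F E v * θ)
          = ∑ u : F, χ (algebraMap F E u + algebraMap F E v * θ) :=
        Fintype.sum_bijective (fun α : F => v * α) (Equiv.mulLeft₀ v hv0).bijective
          _ _ (fun α => rfl)
      rw [← hre, hB, Finset.mul_sum]
      apply Finset.sum_congr rfl
      intro α _
      rw [← map_mul χ]
      congr 1
      simp only [map_mul]
      ring
    rw [h0row, Finset.sum_congr rfl hrow, ← Finset.sum_mul] at hPhi
    exact hPhi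
  constructor
  · -- case 1 : order does not divide q + 1
    intro hnd
    -- χ is nontrivial on the image of Fˣ, hence SF = 0
    have hex : ∃ y₀ : F, y₀ ≠ 0 ∧ χ (algebraMap F E y₀) ≠ 1 := by
      by_contra hcon
      push_neg at hcon
      exact hnd ((aux_order_iff q hq2 F E hF hE χ).mpr hcon)
    obtain ⟨y₀, hy₀, hχy₀⟩ := hex
    have hSF0 : SF = 0 := by
      have hre : ∑ y : F, χ (algebraMap F E (y₀ * y)) = SF :=
        Fintype.sum_bijective (fun y : F => y₀ * y) (Equiv.mulLeft₀ y₀ hy₀).bijective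
          _ _ (fun y => rfl)
      have hre2 : ∑ y : F, χ (algebraMap F E (y₀ * y)) = χ (algebraMap F E y₀) * SF := by
        rw [hSF, Finset.mul_sum]
        exact Finset.sum_congr rfl (fun y _ => by rw [map_mul, map_mul χ])
      have hz : (χ (algebraMap F E y₀) - 1) * SF = 0 := by
        rw [sub_mul, one_mul, ← hre2, hre, sub_self]
      rcases mul_eq_zero.mp hz with h | h
      · exact absurd (by linear_combination h) hχy₀
      · exact h
    -- conjugation lemma
    have hconj : ∀ x : E, x ≠ 0 → (starRingEnd ℂ) (χ x) = χ x⁻¹ := by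
      intro x hx
      have hn : χ x ^ (q ^ 2 - 1) = 1 := by
        rw [← map_pow, ← hE, FiniteField.pow_card_sub_one_eq_one x hx, map_one]
      have hn0 : q ^ 2 - 1 ≠ 0 := by
        have : 2 ≤ q ^ 2 := by nlinarith
        omega
      have habs : ‖χ x‖ = 1 := Complex.norm_eq_one_of_pow_eq_one hn hn0
      have hinv : (χ x)⁻¹ = (starRingEnd ℂ) (χ x) := Complex.inv_eq_conj habs
      have hmul : χ x * χ x⁻¹ = 1 := by
        rw [← map_mul, mul_inv_cancel₀ hx, map_one]
      rw [← hinv]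
      exact (eq_inv_of_mul_eq_one_right hmul).symm
    -- B * conj B = q
    set g : F × F → E :=
      fun p => (θ + algebraMap F E p.1) * (θ + algebraMap F E p.2)⁻¹ with hg
    have hBconj : (starRingEnd ℂ) B = ∑ β : F, χ ((θ + algebraMap F E β)⁻¹) := by
      rw [hB, map_sum]
      exact Finset.sum_congr rfl (fun β _ => hconj _ (hne β))
    have hprod : B * (starRingEnd ℂ) B = ∑ p ∈ Finset.univ ×ˢ Finset.univ, χ (g p) := by
      rw [hBconj, hB, Fintype.sum_mul_sum, Finset.sum_product]
      exact Finset.sum_congr rfl (fun α _ => Finset.sum_congr rfl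
        (fun β _ => by rw [hg]; rw [← map_mul χ]))
    -- diagonal contributes q
    have hdiag : ∑ p ∈ (Finset.univ : Finset F).diag, χ (g p) = (q : ℂ) := by
      have hone : ∀ p ∈ (Finset.univ : Finset F).diag, χ (g p) = 1 := by
        intro p hp
        obtain ⟨-, hp2⟩ := Finset.mem_diag.mp hp
        rw [hg]
        simp only
        rw [← hp2, mul_inv_cancel₀ (hne p.1), map_one]
      rw [Finset.sum_congr rfl hone, Finset.sum_const, Finset.diag_card,
        Finset.card_univ, hF, nsmul_eq_mul, mul_one]
    -- off-diagonal is a bijection onto E minus the image of F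
    set D : Finset (F × F) := (Finset.univ : Finset F).offDiag with hD
    set Tgt : Finset E := Finset.univ \ Finset.univ.image (algebraMap F E) with hTgt
    have hgmem : ∀ p ∈ D, g p ∈ Tgt := by
      rintro ⟨α, β⟩ hp
      obtain ⟨-, -, hab⟩ := Finset.mem_offDiag.mp hp
      rw [hTgt, Finset.mem_sdiff]
      refine ⟨Finset.mem_univ _, ?_⟩
      rw [Finset.mem_image]
      rintro ⟨t, -, hti⟩
      rw [hg] at hti
      simp only at hti
      have h1 : algebraMap F E t * (θ + algebraMap F E β) = θ + algebraMap F E α := by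
        rw [hti, inv_mul_cancel_right₀ (hne β)]
      by_cases ht : t = 1
      · subst ht
        simp only [map_one, one_mul] at h1
        exact hab (hainj (by linear_combination -h1))
      · apply hθ
        have h1t : (1 : F) - t ≠ 0 := sub_ne_zero.mpr (Ne.symm ht)
        have hs' : algebraMap F E ((1 : F) - t) ≠ 0 := by
          simpa using (map_ne_zero (algebraMap F E)).mpr h1t
        refine ⟨(t * β - α) / (1 - t), ?_⟩
        rw [map_div₀, div_eq_iff hs']
        simp only [map_sub, map_mul, map_one]
        linear_combination h1
    have hginj : ∀ p ∈ D, ∀ p' ∈ D, g p = g p' → p = p' := by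
      rintro ⟨α, β⟩ hp ⟨γ, δ⟩ hp' hgp
      obtain ⟨-, -, hab⟩ := Finset.mem_offDiag.mp hp
      obtain ⟨-, -, hgd⟩ := Finset.mem_offDiag.mp hp'
      rw [hg] at hgp
      simp only at hgp
      have h1 : (θ + algebraMap F E α) * (θ + algebraMap F E δ)
          = (θ + algebraMap F E γ) * (θ + algebraMap F E β) := by
        field_simp [hne β, hne δ] at hgp
        linear_combination hgp
      by_cases hc : α + δ = γ + β
      · have hc' : algebraMap F E α + algebraMap F E δ
            = algebraMap F E γ + algebraMap F E β := by
          rw [← map_add, ← map_add]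
          exact congrArg _ hc
        have h2 : algebraMap F E γ * algebraMap F E β
            = algebraMap F E α * algebraMap F E δ := by linear_combination θ * hc' - h1
        have h3 : γ * β = α * δ := by
          apply hainj
          simp only [map_mul]
          exact h2
        have hd0 : (α - γ) * (γ - δ) = 0 := by linear_combination h3 + γ * hc
        rcases mul_eq_zero.mp hd0 with h | h
        · have hag : α = γ := by linear_combination h
          have hbd : β = δ := by linear_combination hag - hc
          simp [hag, hbd]
        · exact absurd (by linear_combination h) hgd
      · exfalso
        apply hθ
        have hs : α + δ - (γ + β) ≠ 0 := sub_ne_zero.mpr hc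
        have hs' : algebraMap F E (α + δ - (γ + β)) ≠ 0 := by
          simpa using (map_ne_zero (algebraMap F E)).mpr hs
        refine ⟨(γ * β - α * δ) / (α + δ - (γ + β)), ?_⟩
        rw [map_div₀, div_eq_iff hs']
        simp only [map_sub, map_mul, map_add]
        linear_combination -h1
    have himgcard : (D.image g).card = q * q - q := by
      rw [Finset.card_image_of_injOn (fun p hp p' hp' => hginj p hp p' hp'), hD,
        Finset.offDiag_card, Finset.card_univ, hF]
    have htgtcard : Tgt.card = q * q - q := by
      rw [hTgt, Finset.card_sdiff_of_subset (Finset.subset_univ _), Finset.card_univ, hE,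
        Finset.card_image_of_injective _ hainj, Finset.card_univ, hF]
      ring_nf
    have himg : D.image g = Tgt := by
      apply Finset.eq_of_subset_of_card_le
      · intro x hx
        rw [Finset.mem_image] at hx
        obtain ⟨p, hp, rfl⟩ := hx
        exact hgmem p hp
      · rw [htgtcard, himgcard]
    have hoff : ∑ p ∈ D, χ (g p) = 0 := by
      rw [← Finset.sum_image hginj, himg, hTgt,
        Finset.sum_sdiff_eq_sub (Finset.subset_univ _), hsumE,
        Finset.sum_image (fun y _ y' _ h => hainj h), ← hSF, hSF0, sub_zero]
    have hmulconj : B * (starRingEnd ℂ) B = (q : ℂ) := by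
      rw [hprod, ← Finset.diag_union_offDiag,
        Finset.sum_union (Finset.disjoint_diag_offDiag _), hdiag, ← hD, hoff, add_zero]
    have hnsq : Complex.normSq B = (q : ℝ) := by
      have h : (Complex.normSq B : ℂ) = (q : ℂ) := by
        rw [← Complex.mul_conj, hmulconj]
      exact_mod_cast h
    rw [Complex.norm_def, hnsq]
  · -- case 2 : order divides q + 1
    intro hd
    have htriv : ∀ y : F, y ≠ 0 → χ (algebraMap F E y) = 1 :=
      (aux_order_iff q hq2 F E hF hE χ).mp hd
    have herase : ∑ v ∈ Finset.univ.erase (0 : F), χ (algebraMap F E v) = ((q : ℂ) - 1) := by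
      rw [Finset.sum_congr rfl (fun v hv => htriv v (Finset.ne_of_mem_erase hv)),
        Finset.sum_const, Finset.card_erase_of_mem (Finset.mem_univ _),
        Finset.card_univ, hF, nsmul_eq_mul, mul_one]
      push_cast [Nat.cast_sub (show 1 ≤ q by omega)]
      ring
    have hSFval : SF = (q : ℂ) - 1 := by
      rw [hSF, ← Finset.add_sum_erase Finset.univ _ (Finset.mem_univ (0 : F)),
        show χ (algebraMap F E 0) = 0 by rw [map_zero]; exact χ.map_zero, zero_add]
      exact herase
    rw [hSFval, herase] at hstruct
    have hq1 : (q : ℂ) - 1 ≠ 0 := by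
      have h1 : (q : ℂ) ≠ 1 := by
        exact_mod_cast (show q ≠ 1 by omega)
      exact sub_ne_zero.mpr h1
    have hfin : ((q : ℂ) - 1) * (1 + B) = 0 := by linear_combination hstruct
    rcases mul_eq_zero.mp hfin with h | h
    · exact absurd h hq1
    · linear_combination h
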